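/- Let X be an n × (n+1) real matrix all of whose maximal (n × n) minors have the same sign. If X' is obtained from X by switching two columns whose indices have the same parity, then all maximal minors of X' have the opposite sign. -/

import Mathlib

/-- Cofactor expansion: the determinant of the matrix obtained by prepending
the standard basis row vector `e_{j'}` to `X` equals `(-1)^{j'}` times the
maximal minor of `X` omitting column `j'`. -/
lemma border_det_aux {n : ℕ} (X : Matrix (Fin n) (Fin (n + 1)) ℝ) (j' : Fin (n + 1)) :
    (Matrix.of (Fin.cons (fun k => if k = j' then (1 : ℝ) else 0) X) :
        Matrix (Fin (n + 1)) (Fin (n + 1)) ℝ).det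
      = (-1) ^ (j' : ℕ) * (X.submatrix id (Fin.succAbove j')).det := by
  change (Matrix.of (Fin.cons (fun k => if k = j' then (1 : ℝ) else 0) (fun i j => X i j)) :
        Matrix (Fin (n + 1)) (Fin (n + 1)) ℝ).det = _
  rw [Matrix.det_succ_row_zero]
  rw [Finset.sum_eq_single j']
  · simp [Matrix.submatrix]
  · intro b _ hb
    simp [hb]
  · simp

lemma minor_swap_aux {n : ℕ} (X : Matrix (Fin n) (Fin (n + 1)) ℝ) (p q : Fin (n + 1))
    (hpq : p ≠ q) (hpar : (p : ℕ) % 2 = (q : ℕ) % 2) (j' : Fin (n + 1)) :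
    ((X.submatrix id (Equiv.swap p q)).submatrix id (Fin.succAbove j')).det
      = - (X.submatrix id (Fin.succAbove (Equiv.swap p q j'))).det := by
  set σ := Equiv.swap p q with hσ
  -- the bordered matrix for the swapped matrix is the column-permuted
  -- bordered matrix for `X` with border row `e_{σ j'}`
  have key : (Matrix.of (Fin.cons (fun k => if k = j' then (1 : ℝ) else 0)
        (X.submatrix id σ)) : Matrix (Fin (n + 1)) (Fin (n + 1)) ℝ)
      = (Matrix.of (Fin.cons (fun k => if k = σ j' then (1 : ℝ) else 0) X) :
          Matrix (Fin (n + 1)) (Fin (n + 1)) ℝ).submatrix id σ := by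
    ext i k
    refine Fin.cases ?_ ?_ i
    · simp only [Matrix.submatrix_apply, Matrix.of_apply, Fin.cons_zero, id]
      change (Fin.cons (α := fun _ => Fin (n+1) → ℝ) (fun k => if k = j' then (1 : ℝ) else 0) (fun i j => X i (σ j)) 0 k) = Fin.cons (α := fun _ => Fin (n+1) → ℝ) (fun k => if k = σ j' then (1 : ℝ) else 0) (fun i j => X i j) 0 (σ k)
      simp only [Fin.cons_zero]
      by_cases h : k = j' <;> simp [h, σ.apply_eq_iff_eq]
    · intro i
      change (Fin.cons (α := fun _ => Fin (n+1) → ℝ) (fun k => if k = j' then (1 : ℝ) else 0) (fun i j => X i (σ j)) i.succ k) = Fin.cons (α := fun _ => Fin (n+1) → ℝ) (fun k => if k = σ j' then (1 : ℝ) else 0) (fun i j => X i j) i.succ (σ k)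
      simp [Matrix.submatrix]
  have hdet := congrArg Matrix.det key
  rw [border_det_aux, Matrix.det_permute' σ, border_det_aux] at hdet
  have hsign : Equiv.Perm.sign σ = -1 := Equiv.Perm.sign_swap hpq
  rw [hsign] at hdet
  -- parity of σ j' equals parity of j'
  have hparity : ((σ j' : ℕ)) % 2 = (j' : ℕ) % 2 := by
    rcases eq_or_ne j' p with rfl | hp
    · rw [hσ, Equiv.swap_apply_left]; exact hpar.symm
    rcases eq_or_ne j' q with rfl | hq
    · rw [hσ, Equiv.swap_apply_right]; exact hpar
    · rw [hσ, Equiv.swap_apply_of_ne_of_ne hp hq]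
  have hpow : ((-1 : ℝ)) ^ ((σ j' : ℕ)) = (-1) ^ ((j' : ℕ)) := by
    rcases Nat.even_or_odd (j' : ℕ) with he | ho
    · have : Even ((σ j' : ℕ)) := by
        rw [Nat.even_iff] at he ⊢; rw [hparity, he]
      rw [he.neg_one_pow, this.neg_one_pow]
    · have : Odd ((σ j' : ℕ)) := by
        rw [Nat.odd_iff] at ho ⊢; rw [hparity, ho]
      rw [ho.neg_one_pow, this.neg_one_pow]
  rw [hpow] at hdet
  have hne : ((-1 : ℝ)) ^ ((j' : ℕ)) ≠ 0 := by positivity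
  apply mul_left_cancel₀ hne
  rw [hdet]; push_cast; ring

theorem minors_flip_sign_on_same_parity_swap {n : ℕ} (X : Matrix (Fin n) (Fin (n + 1)) ℝ)
    (p q : Fin (n + 1)) (hpq : p ≠ q) (hpar : (p : ℕ) % 2 = (q : ℕ) % 2)
    (hsign : (∀ j : Fin (n + 1), 0 < (X.submatrix id (Fin.succAbove j)).det) ∨
      (∀ j : Fin (n + 1), (X.submatrix id (Fin.succAbove j)).det < 0)) :
    ∀ j j' : Fin (n + 1),
      (X.submatrix id (Fin.succAbove j)).det *
        ((X.submatrix id (Equiv.swap p q)).submatrix id (Fin.succAbove j')).det < 0 := by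
  intro j j'
  rw [minor_swap_aux X p q hpq hpar j']
  rcases hsign with h | h
  · exact mul_neg_of_pos_of_neg (h j) (neg_neg_of_pos (h _))
  · exact mul_neg_of_neg_of_pos (h j) (neg_pos.mpr (h _))
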